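/- Let d ≥ 3, let S be a multiset of nonnegative integers with max(S) > 0, and let G be a finite d-regular graph with girth greater than 3·max(S). If for some vertex v̄ of the polygraph G_S the link of v̄ is nonempty and connected, then either 0 ∈ S, or there is a positive element s of S with 2s ∈ S, or S contains three pairwise distinct elements s, s′, s″ with s″ = s + s′. -/

import Mathlib

open scoped Classical
open Finset Polynomial

noncomputable section

namespace PaperStmt

variable {V : Type}

/-- The degree of a vertex in a finite simple graph. -/
def degR [Fintype V] (G : SimpleGraph V) (v : V) : ℕ :=
  (Finset.univ.filter (fun u => G.Adj v u)).card

/-- The link of a vertex: the subgraph induced on the neighbor set. -/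
def link (G : SimpleGraph V) (v : V) : SimpleGraph (G.neighborSet v) :=
  SimpleGraph.induce (G.neighborSet v) G

/-- `G` is `(a,b)`-regular: `a`-regular, and the link of every vertex is `b`-regular. -/
def IsABRegular [Fintype V] (G : SimpleGraph V) (a b : ℕ) : Prop :=
  (∀ v, degR G v = a) ∧ ∀ v : V, ∀ u : G.neighborSet v, degR (link G v) u = b

/-- The adjacency matrix over `ℝ`. -/
def adjMat [Fintype V] (G : SimpleGraph V) : Matrix V V ℝ :=
  Matrix.of fun u v => if G.Adj u v then (1 : ℝ) else 0

/-- The eigenvalues of the adjacency matrix (with multiplicity), in decreasing order,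
so that `λ_k = (eigList G).getD (k-1) 0`. -/
def eigList [Fintype V] [DecidableEq V] (G : SimpleGraph V) : List ℝ :=
  (((adjMat G).charpoly.roots).sort (· ≤ ·)).reverse

/-- `λ₂(G)`, the second largest adjacency eigenvalue. -/
def lambda2 [Fintype V] [DecidableEq V] (G : SimpleGraph V) : ℝ :=
  (eigList G).getD 1 0

/-- `λ(G) = max_{i ≥ 2} |λ_i(G)|`. -/
def lambdaMax [Fintype V] [DecidableEq V] (G : SimpleGraph V) : ℝ :=
  (((eigList G).drop 1).map (fun x => |x|)).foldr max 0

/-- `H` is a `δ`-edge expander: every vertex set `U` has at least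
`δ · min(|U|, |Uᶜ|)` edges to its complement. -/
def IsEdgeExpander [Fintype V] (H : SimpleGraph V) (δ : ℝ) : Prop :=
  ∀ U : Finset V,
    δ * min (U.card : ℝ) (((Finset.univ \ U).card : ℝ)) ≤
      (((U ×ˢ (Finset.univ \ U)).filter (fun p => H.Adj p.1 p.2)).card : ℝ)

/-- The polygraph `G_S` on `V(G)^m`, `m = |S|`: two tuples are adjacent iff
their multiset of coordinatewise distances equals `S`. -/
def polygraph (G : SimpleGraph V) (S : Multiset ℕ) :
    SimpleGraph (Fin (Multiset.card S) → V) where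
  Adj x y := x ≠ y ∧
    Multiset.map (fun i => G.dist (x i) (y i)) (Finset.univ.val) = S
  symm := by
    constructor
    rintro x y ⟨hne, h⟩
    refine ⟨hne.symm, ?_⟩
    have hfun : (fun i => G.dist (y i) (x i)) = fun i => G.dist (x i) (y i) := by
      funext i; exact SimpleGraph.dist_comm
    rw [hfun]; exact h
  loopless := by constructor; rintro x ⟨h, -⟩; exact h rfl

/-- The number of vertices at distance `l` from a fixed vertex of the `d`-regular tree. -/
def Nd (d l : ℕ) : ℕ := if l = 0 then 1 else d * (d - 1) ^ (l - 1)

/-- The multinomial coefficient `m!/(m₁!⋯m_k!)` attached to a multiset `S` of size `m`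
whose distinct values have multiplicities `m₁,…,m_k`. -/
def multinom (S : Multiset ℕ) : ℕ :=
  (Multiset.card S).factorial / ∏ x ∈ S.toFinset, (S.count x).factorial

/-- The Geronimus polynomials (as functions), for parameter `d`. -/
def geronimus (d : ℕ) : ℕ → ℝ → ℝ
  | 0 => fun _ => 1
  | 1 => fun x => x
  | 2 => fun x => x ^ 2 - d
  | (t + 3) => fun x => x * geronimus d (t + 2) x - ((d : ℝ) - 1) * geronimus d (t + 1) x

/-- The graph on `L` where two distinct vertices are adjacent iff they have a
common neighbor in `H`. -/
def commonNbrGraph {W : Type} (H : SimpleGraph W) (L : Set W) : SimpleGraph L where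
  Adj x y := x ≠ y ∧ ∃ w : W, H.Adj x w ∧ H.Adj y w
  symm := by constructor; rintro x y ⟨hne, w, h1, h2⟩; exact ⟨hne.symm, w, h2, h1⟩
  loopless := by constructor; rintro x ⟨h, -⟩; exact h rfl

/-- `w : ℕ → V` describes a non-backtracking walk of length `t` in `G`
(only the values `w 0, …, w t` matter). -/
def IsNBWalk (G : SimpleGraph V) (t : ℕ) (w : ℕ → V) : Prop :=
  (∀ i < t, G.Adj (w i) (w (i + 1))) ∧ ∀ i, 0 < i → i < t → w (i + 1) ≠ w (i - 1)

/-- The graph `H_t` on `V(G)` where distinct `u, v` are adjacent iff there is a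
non-backtracking walk of length `t` from `u` to `v` in `G`. -/
def ntWalkGraph (G : SimpleGraph V) (t : ℕ) : SimpleGraph V :=
  SimpleGraph.fromRel (fun u v => ∃ w : ℕ → V, w 0 = u ∧ w t = v ∧ IsNBWalk G t w)

/-- The auxiliary graph on the edges of `H`: two distinct edges are adjacent iff
their union spans a triangle of `H`. -/
def auxGraph {X : Type} (H : SimpleGraph X) : SimpleGraph H.edgeSet where
  Adj e f := e ≠ f ∧ ∃ x y z : X, H.Adj x y ∧ H.Adj x z ∧ H.Adj y z ∧
      ((e : Sym2 X) = s(x, y) ∨ (e : Sym2 X) = s(x, z) ∨ (e : Sym2 X) = s(y, z)) ∧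
      ((f : Sym2 X) = s(x, y) ∨ (f : Sym2 X) = s(x, z) ∨ (f : Sym2 X) = s(y, z))
  symm := by
    constructor
    rintro e f ⟨hne, x, y, z, h1, h2, h3, he, hf⟩
    exact ⟨hne.symm, x, y, z, h1, h2, h3, hf, he⟩
  loopless := by constructor; rintro e ⟨h, -⟩; exact h rfl

/-- The ordered triangles of a finite graph. -/
def triangleFinset {X : Type} [Fintype X] (H : SimpleGraph X) : Finset (X × X × X) :=
  Finset.univ.filter (fun t => H.Adj t.1 t.2.1 ∧ H.Adj t.1 t.2.2 ∧ H.Adj t.2.1 t.2.2)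

/-- The complete tripartite graph `K_{d,d,d}`. -/
def tripartite (d : ℕ) : SimpleGraph (Fin 3 × Fin d) where
  Adj u v := u.1 ≠ v.1
  symm := ⟨fun _ _ h => Ne.symm h⟩
  loopless := ⟨fun _ h => h rfl⟩


namespace AuxPoly

variable {V : Type} {G : SimpleGraph V}

lemma mem_support_cons' {u x w z : V} (r : G.Adj u x) (p : G.Walk x w)
    (h : z ∈ (SimpleGraph.Walk.cons r p).support) (hne : u ≠ z) : z ∈ p.support := by
  rw [SimpleGraph.Walk.support_cons, List.mem_cons] at h
  rcases h with h | h
  · exact absurd h.symm hne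
  · exact h

lemma path_loop_nil {u : V} (q : G.Walk u u) (hq : q.IsPath) : q = SimpleGraph.Walk.nil := by
  cases q with
  | nil => rfl
  | cons h t =>
      exfalso
      have := hq.support_nodup
      rw [SimpleGraph.Walk.support_cons, List.nodup_cons] at this
      exact this.1 t.end_mem_support

lemma append_isPath {a b c : V} {pa : G.Walk a b} {pb : G.Walk b c}
    (ha : pa.IsPath) (hb : pb.IsPath)
    (hd : ∀ w, w ∈ pa.support → w ∈ pb.support → w = b) : (pa.append pb).IsPath := by
  rw [SimpleGraph.Walk.isPath_def, SimpleGraph.Walk.support_append]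
  refine List.Nodup.append ha.support_nodup (hb.support_nodup.sublist (List.tail_sublist _)) ?_
  intro w hw1 hw2
  have hwb : w = b := hd w hw1 (List.mem_of_mem_tail hw2)
  subst hwb
  have := hb.support_nodup
  rw [pb.support_eq_cons, List.nodup_cons] at this
  exact this.1 hw2

lemma takeUntil_cons {u x w z : V} (r : G.Adj u x) (p : G.Walk x w)
    (h : z ∈ (SimpleGraph.Walk.cons r p).support) (hne : u ≠ z) :
    (SimpleGraph.Walk.cons r p).takeUntil z h =
      SimpleGraph.Walk.cons r (p.takeUntil z (mem_support_cons' r p h hne)) := by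
  simp [SimpleGraph.Walk.takeUntil, dif_neg hne]

lemma takeUntil_start {u w : V} (p : G.Walk u w) (h : u ∈ p.support) :
    p.takeUntil u h = SimpleGraph.Walk.nil := by
  cases p with
  | nil => rfl
  | cons r t => simp [SimpleGraph.Walk.takeUntil]

lemma first_inter {u v : V} (p : G.Walk u v) (L : List V) (hv : v ∈ L) :
    ∃ z, ∃ hz : z ∈ p.support, z ∈ L ∧
      ∀ y ∈ (p.takeUntil z hz).support, y ∈ L → y = z := by
  induction p with
  | nil =>
      refine ⟨_, SimpleGraph.Walk.start_mem_support _, hv, ?_⟩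
      intro y hy _
      rw [takeUntil_start] at hy
      simpa using hy
  | @cons a b c r t ih =>
      by_cases ha : a ∈ L
      · refine ⟨a, SimpleGraph.Walk.start_mem_support _, ha, ?_⟩
        intro y hy _
        rw [takeUntil_start] at hy
        simpa using hy
      · obtain ⟨z, hz, hzL, hmin⟩ := ih hv
        have hza : a ≠ z := fun h => ha (h ▸ hzL)
        have hz' : z ∈ (SimpleGraph.Walk.cons r t).support := by
          rw [SimpleGraph.Walk.support_cons, List.mem_cons]; exact Or.inr hz
        refine ⟨z, hz', hzL, ?_⟩
        intro y hy hyL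
        rw [takeUntil_cons r t hz' hza, SimpleGraph.Walk.support_cons, List.mem_cons] at hy
        rcases hy with rfl | hy
        · exact absurd hyL ha
        · exact hmin y (by convert hy using 3) hyL



variable {V : Type} {G : SimpleGraph V} {M : ℕ}

lemma unique_path (hg : ∀ (c : V) (w : G.Walk c c), w.IsCycle → 3 * M < w.length)
    {u v : V} (p : G.Walk u v) : ∀ (q : G.Walk u v), p.IsPath → q.IsPath →
    p.length + q.length ≤ 3 * M → p = q := by
  induction p with
  | nil =>
      intro q _ hq _
      exact (path_loop_nil q hq).symm
  | @cons u x v h p' ih =>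
      intro q hp hq hlen
      cases q with
      | nil =>
          exfalso
          have := hp.support_nodup
          rw [SimpleGraph.Walk.support_cons, List.nodup_cons] at this
          exact this.1 p'.end_mem_support
      | @cons _ y _ h2 q' =>
          by_cases hxy : x = y
          · subst hxy
            have : p' = q' := by
              refine ih q' hp.of_cons hq.of_cons ?_
              simp only [SimpleGraph.Walk.length_cons] at hlen
              omega
            rw [this]
          · exfalso
            -- build a cycle
            have hup : u ∉ p'.support := by
              have := hp.support_nodup
              rw [SimpleGraph.Walk.support_cons, List.nodup_cons] at this
              exact this.1
            have huq : u ∉ q'.support := by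
              have := hq.support_nodup
              rw [SimpleGraph.Walk.support_cons, List.nodup_cons] at this
              exact this.1
            obtain ⟨z, hz, hzq, hmin⟩ := first_inter p' q'.support q'.end_mem_support
            have hzu : z ≠ u := fun hh => huq (hh ▸ hzq)
            have hzQ : z ∈ (SimpleGraph.Walk.cons h2 q').support := by
              rw [SimpleGraph.Walk.support_cons, List.mem_cons]; exact Or.inr hzq
            set pa := p'.takeUntil z hz with hpa
            set q1 := (SimpleGraph.Walk.cons h2 q').takeUntil z hzQ with hq1
            have hq1eq : q1 = SimpleGraph.Walk.cons h2 (q'.takeUntil z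
                (mem_support_cons' h2 q' hzQ (Ne.symm hzu))) :=
              takeUntil_cons h2 q' hzQ (Ne.symm hzu)
            have hpaP : pa.IsPath := hp.of_cons.takeUntil hz
            have hq1P : q1.IsPath := hq.takeUntil hzQ
            have hpasub : ∀ w, w ∈ pa.support → w ∈ p'.support :=
              fun w hw => SimpleGraph.Walk.support_takeUntil_subset _ hz hw
            -- inner walk
            have hdisj : ∀ w, w ∈ pa.support → w ∈ q1.reverse.support → w = z := by
              intro w hw1 hw2
              rw [SimpleGraph.Walk.support_reverse, List.mem_reverse] at hw2
              have hw2' : w ∈ (SimpleGraph.Walk.cons h2 q').support :=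
                SimpleGraph.Walk.support_takeUntil_subset _ hzQ hw2
              rw [SimpleGraph.Walk.support_cons, List.mem_cons] at hw2'
              rcases hw2' with rfl | hw2'
              · exact absurd (hpasub w hw1) hup
              · exact hmin w hw1 hw2'
            have hWP : (pa.append q1.reverse).IsPath :=
              append_isPath hpaP hq1P.reverse hdisj
            have hedge : s(u, x) ∉ (pa.append q1.reverse).edges := by
              rw [SimpleGraph.Walk.edges_append, List.mem_append]
              rintro (he | he)
              · exact hup (hpasub u (SimpleGraph.Walk.fst_mem_support_of_mem_edges pa he))
              · rw [SimpleGraph.Walk.edges_reverse, List.mem_reverse, hq1eq,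
                  SimpleGraph.Walk.edges_cons, List.mem_cons] at he
                rcases he with he | he
                · rw [Sym2.congr_right] at he
                  exact hxy he
                · exact huq (SimpleGraph.Walk.support_takeUntil_subset _ _
                    (SimpleGraph.Walk.fst_mem_support_of_mem_edges _ he))
            have hcyc : (SimpleGraph.Walk.cons h (pa.append q1.reverse)).IsCycle := by
              rw [SimpleGraph.Walk.cons_isCycle_iff]
              exact ⟨hWP, hedge⟩
            have hlc := hg u _ hcyc
            have h1 : pa.length ≤ p'.length := SimpleGraph.Walk.length_takeUntil_le _ hz
            have h2' : q1.length ≤ (SimpleGraph.Walk.cons h2 q').length :=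
              SimpleGraph.Walk.length_takeUntil_le _ hzQ
            simp only [SimpleGraph.Walk.length_cons, SimpleGraph.Walk.length_append,
              SimpleGraph.Walk.length_reverse] at hlc hlen h2'
            omega



variable {V : Type} {G : SimpleGraph V} {M : ℕ}

/-- `x` is the first step of a geodesic from `v` to `u`. -/
def IsDir (G : SimpleGraph V) (v x u : V) : Prop :=
  G.Adj v x ∧ G.dist x u + 1 = G.dist v u

lemma dist_tri {u v w : V} (h1 : G.Reachable u v) (h2 : G.Reachable v w) :
    G.dist u w ≤ G.dist u v + G.dist v w := by
  obtain ⟨p, -, hp⟩ := h1.exists_path_of_dist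
  obtain ⟨q, -, hq⟩ := h2.exists_path_of_dist
  have := SimpleGraph.dist_le (p.append q)
  rwa [SimpleGraph.Walk.length_append, hp, hq] at this

lemma geodesic_mem {s t w : V} (p : G.Walk s t) (hgeo : p.length = G.dist s t)
    (hw : w ∈ p.support) : G.dist s w + G.dist w t ≤ p.length := by
  have hs := SimpleGraph.dist_le (p.takeUntil w hw)
  have hd := SimpleGraph.dist_le (p.dropUntil w hw)
  have := congrArg SimpleGraph.Walk.length (p.take_spec hw)
  rw [SimpleGraph.Walk.length_append] at this
  omega

lemma dir_exists {v u : V} (hd : 0 < G.dist v u) : ∃ x, IsDir G v x u := by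
  have hr : G.Reachable v u := SimpleGraph.Reachable.of_dist_ne_zero (Nat.pos_iff_ne_zero.mp hd)
  obtain ⟨p, -, hp⟩ := hr.exists_path_of_dist
  cases p with
  | nil => rw [← hp] at hd; simp at hd
  | @cons _ x _ h t =>
      refine ⟨x, h, ?_⟩
      have h1 : G.dist x u ≤ t.length := SimpleGraph.dist_le t
      have h2 : G.dist v u ≤ G.dist v x + G.dist x u :=
        dist_tri ⟨h.toWalk⟩ ⟨t⟩
      have h3 : G.dist v x = 1 := SimpleGraph.dist_eq_one_iff_adj.mpr h
      rw [SimpleGraph.Walk.length_cons] at hp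
      omega

lemma dir_cons {v x u : V} (hx : IsDir G v x u) (hpos : 0 < G.dist v u) :
    ∃ p : G.Walk x u, p.IsPath ∧ p.length = G.dist x u ∧
      (SimpleGraph.Walk.cons hx.1 p).IsPath := by
  have hrvu : G.Reachable v u := SimpleGraph.Reachable.of_dist_ne_zero (Nat.pos_iff_ne_zero.mp hpos)
  have hrxu : G.Reachable x u := (SimpleGraph.Adj.reachable hx.1).symm.trans hrvu
  obtain ⟨p, hpP, hp⟩ := hrxu.exists_path_of_dist
  refine ⟨p, hpP, hp, ?_⟩
  rw [SimpleGraph.Walk.cons_isPath_iff]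
  refine ⟨hpP, fun hv => ?_⟩
  have := geodesic_mem p hp hv
  have h2 := hx.2
  omega

lemma dir_unique (hg : ∀ (c : V) (w : G.Walk c c), w.IsCycle → 3 * M < w.length)
    {v x x' u : V} (hle : G.dist v u ≤ M) (hx : IsDir G v x u) (hx' : IsDir G v x' u) :
    x = x' := by
  have hpos : 0 < G.dist v u := by have := hx.2; omega
  obtain ⟨p, hpP, hp, hcp⟩ := dir_cons hx hpos
  obtain ⟨p', hpP', hp', hcp'⟩ := dir_cons hx' hpos
  have heq : SimpleGraph.Walk.cons hx.1 p = SimpleGraph.Walk.cons hx'.1 p' := by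
    refine unique_path hg _ _ hcp hcp' ?_
    simp only [SimpleGraph.Walk.length_cons]
    have h2 := hx.2
    have h2' := hx'.2
    omega
  have := congrArg (fun w => w.getVert 1) heq
  simpa [SimpleGraph.Walk.getVert_cons_succ, SimpleGraph.Walk.getVert_zero] using this



variable {V : Type} {G : SimpleGraph V} {M : ℕ}

lemma extend_dist (hg : ∀ (c : V) (w : G.Walk c c), w.IsCycle → 3 * M < w.length)
    (hdeg : ∀ w y : V, ∃ z, G.Adj w z ∧ z ≠ y)
    {v x : V} (hvx : G.Adj v x) :
    ∀ k, 1 ≤ k → k ≤ M → ∃ u, G.dist v u = k ∧ G.dist x u + 1 = k := by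
  intro k
  induction k with
  | zero => omega
  | succ k ihk =>
      intro _ hkM
      by_cases hk1 : k = 0
      · subst hk1
        exact ⟨x, SimpleGraph.dist_eq_one_iff_adj.mpr hvx, by simp⟩
      · obtain ⟨u, hvu, hxu⟩ := ihk (by omega) (by omega)
        have hkpos : 0 < k := by omega
        have hruv : G.Reachable u v := (SimpleGraph.Reachable.of_dist_ne_zero (by omega)).symm
        have hdistuv : G.dist u v = k := by rw [SimpleGraph.dist_comm]; exact hvu
        obtain ⟨y₀, hy₀⟩ := dir_exists (G := G) (v := u) (u := v) (by omega)
        obtain ⟨z, huz, hzy₀⟩ := hdeg u y₀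
        have hrvz : G.Reachable v z := (hruv.symm).trans huz.reachable
        have hrxu : G.Reachable x u :=
          (hvx.reachable).symm.trans (hruv.symm)
        -- upper bound on dist v z
        have hub : G.dist v z ≤ k + 1 := by
          have := dist_tri (G := G) hruv.symm huz.reachable
          have h1 : G.dist u z = 1 := SimpleGraph.dist_eq_one_iff_adj.mpr huz
          omega
        have hlb : k ≤ G.dist v z + 1 := by
          have := dist_tri (G := G) hrvz huz.reachable.symm
          have h1 : G.dist z u = 1 := SimpleGraph.dist_eq_one_iff_adj.mpr huz.symm
          omega
        -- rule out dist v z = k - 1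
        have hne1 : G.dist v z ≠ k - 1 := by
          intro hcase
          have hzdir : IsDir G u z v := by
            refine ⟨huz, ?_⟩
            rw [SimpleGraph.dist_comm (G := G) (u := z)]
            omega
          exact hzy₀ (dir_unique hg (by omega) hzdir hy₀)
        -- rule out dist v z = k
        have hne2 : G.dist v z ≠ k := by
          intro hcase
          obtain ⟨p, hpP, hp⟩ := (hruv.symm).exists_path_of_dist
          have hznp : z ∉ p.support := by
            intro hzp
            have := geodesic_mem p (by omega) hzp
            have hz0 : G.dist z u = 0 := by
              have := SimpleGraph.dist_le p
              omega
            have : z = u := ((huz.symm.reachable).dist_eq_zero_iff).mp hz0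
            subst this
            exact G.irrefl huz
          have hPpath : (p.concat huz).IsPath := by
            rw [SimpleGraph.Walk.concat_eq_append]
            refine append_isPath hpP ?_ ?_
            · rw [SimpleGraph.Walk.cons_isPath_iff]
              exact ⟨SimpleGraph.Walk.IsPath.nil, by simp [huz.ne]⟩
            · intro w hw1 hw2
              rw [SimpleGraph.Walk.support_cons] at hw2
              simp only [SimpleGraph.Walk.support_nil, List.mem_cons, List.mem_singleton] at hw2
              rcases hw2 with rfl | rfl | h
              · rfl
              · exact absurd hw1 hznp
              · simp at h
          obtain ⟨q, hqP, hq⟩ := hrvz.exists_path_of_dist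
          have heq : p.concat huz = q := by
            refine unique_path hg _ _ hPpath hqP ?_
            rw [SimpleGraph.Walk.length_concat]
            omega
          have := congrArg SimpleGraph.Walk.length heq
          rw [SimpleGraph.Walk.length_concat] at this
          omega
        have hvz : G.dist v z = k + 1 := by omega
        refine ⟨z, hvz, ?_⟩
        -- dist x z = k
        have hxzub : G.dist x z ≤ k := by
          have := dist_tri (G := G) hrxu huz.reachable
          have h1 : G.dist u z = 1 := SimpleGraph.dist_eq_one_iff_adj.mpr huz
          omega
        have hxzlb : k ≤ G.dist x z := by
          have := dist_tri (G := G) hvx.reachable ((hvx.reachable).symm.trans hrvz)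
          have h1 : G.dist v x = 1 := SimpleGraph.dist_eq_one_iff_adj.mpr hvx
          omega
        omega

lemma dirs_ne_imp (hg : ∀ (c : V) (w : G.Walk c c), w.IsCycle → 3 * M < w.length)
    {v u w x y : V}
    (hxu : IsDir G v x u) (hyw : IsDir G v y w) (hxy : x ≠ y)
    (ha : G.dist v u ≤ M) (hb : G.dist v w ≤ M) (hc : G.dist u w ≤ M) :
    G.dist u w = G.dist v u + G.dist v w := by
  have hapos : 0 < G.dist v u := by have := hxu.2; omega
  have hbpos : 0 < G.dist v w := by have := hyw.2; omega
  obtain ⟨p, hpP, hp, hcp⟩ := dir_cons hxu hapos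
  obtain ⟨q, hqP, hq, hcq⟩ := dir_cons hyw hbpos
  set P := SimpleGraph.Walk.cons hxu.1 p with hP
  set Q := SimpleGraph.Walk.cons hyw.1 q with hQ
  have hPlen : P.length = G.dist v u := by
    rw [hP, SimpleGraph.Walk.length_cons]; have := hxu.2; omega
  have hQlen : Q.length = G.dist v w := by
    rw [hQ, SimpleGraph.Walk.length_cons]; have := hyw.2; omega
  -- supports intersect only at v
  have hdisj : ∀ z, z ∈ P.support → z ∈ Q.support → z = v := by
    intro z hzP hzQ
    by_contra hzv
    have hvz : v ≠ z := fun hh => hzv hh.symm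
    have hPt := takeUntil_cons hxu.1 p hzP hvz
    have hQt := takeUntil_cons hyw.1 q hzQ hvz
    have htP : (P.takeUntil z hzP).IsPath := hcp.takeUntil hzP
    have htQ : (Q.takeUntil z hzQ).IsPath := hcq.takeUntil hzQ
    have heq : P.takeUntil z hzP = Q.takeUntil z hzQ := by
      refine unique_path hg _ _ htP htQ ?_
      have l1 : (P.takeUntil z hzP).length ≤ P.length :=
        SimpleGraph.Walk.length_takeUntil_le _ hzP
      have l2 : (Q.takeUntil z hzQ).length ≤ Q.length :=
        SimpleGraph.Walk.length_takeUntil_le _ hzQ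
      omega
    rw [hPt, hQt] at heq
    have := congrArg (fun w => w.getVert 1) heq
    simp only [SimpleGraph.Walk.getVert_cons_succ, SimpleGraph.Walk.getVert_zero] at this
    exact hxy this
  have hT : (P.reverse.append Q).IsPath := by
    refine append_isPath hcp.reverse hcq ?_
    intro z hz1 hz2
    rw [SimpleGraph.Walk.support_reverse, List.mem_reverse] at hz1
    exact hdisj z hz1 hz2
  have hTlen : (P.reverse.append Q).length = G.dist v u + G.dist v w := by
    rw [SimpleGraph.Walk.length_append, SimpleGraph.Walk.length_reverse, hPlen, hQlen]
  have hruw : G.Reachable u w := by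
    have h1 : G.Reachable v u := SimpleGraph.Reachable.of_dist_ne_zero (by omega)
    have h2 : G.Reachable v w := SimpleGraph.Reachable.of_dist_ne_zero (by omega)
    exact h1.symm.trans h2
  obtain ⟨R, hRP, hR⟩ := hruw.exists_path_of_dist
  by_contra hne
  have heq : R = P.reverse.append Q := by
    refine unique_path hg _ _ hRP hT ?_
    omega
  have := congrArg SimpleGraph.Walk.length heq
  rw [hTlen, hR] at this
  exact hne this


end AuxPoly

open AuxPoly in
theorem statement12 (d : ℕ) (hd : 3 ≤ d) (S : Multiset ℕ) (hS : 0 < S.sup)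
    {V : Type} [Fintype V] (G : SimpleGraph V)
    (hreg : ∀ v, degR G v = d)
    (hgirth : ((3 * S.sup : ℕ) : ℕ∞) < G.egirth)
    (v : Fin (Multiset.card S) → V)
    (hne : ((polygraph G S).neighborSet v).Nonempty)
    (hconn : (link (polygraph G S) v).Connected) :
    0 ∈ S ∨ (∃ s ∈ S, 0 < s ∧ 2 * s ∈ S) ∨
      (∃ s s' s'' : ℕ, s ∈ S ∧ s' ∈ S ∧ s'' ∈ S ∧
        s ≠ s' ∧ s ≠ s'' ∧ s' ≠ s'' ∧ s'' = s + s') := by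
  classical
  by_contra hcon
  push_neg at hcon
  obtain ⟨h0, h1, h2⟩ := hcon
  set M := S.sup with hMdef
  have hM : 1 ≤ M := hS
  have hcyc : ∀ (c : V) (w : G.Walk c c), w.IsCycle → 3 * M < w.length := by
    intro c w hw
    have hle := SimpleGraph.le_egirth.mp (le_refl G.egirth) c w hw
    have := lt_of_lt_of_le hgirth hle
    exact_mod_cast this
  have hdeg : ∀ w y : V, ∃ z, G.Adj w z ∧ z ≠ y := by
    intro w y
    have hcard : 1 < (Finset.univ.filter (fun u => G.Adj w u)).card := by
      have := hreg w
      unfold degR at this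
      omega
    obtain ⟨z, hz, hzy⟩ := Finset.exists_mem_ne hcard y
    exact ⟨z, (Finset.mem_filter.mp hz).2, hzy⟩
  have hS0 : S ≠ 0 := by intro h; rw [hMdef, h] at hS; simp at hS
  have hm : 0 < Multiset.card S := Multiset.card_pos.mpr hS0
  let i₀ : Fin (Multiset.card S) := ⟨0, hm⟩
  have memS : ∀ (x y : Fin (Multiset.card S) → V), (polygraph G S).Adj x y →
      ∀ i, G.dist (x i) (y i) ∈ S := by
    intro x y hxy i
    obtain ⟨-, hmap⟩ := hxy
    rw [← hmap]
    exact Multiset.mem_map_of_mem _ (Finset.mem_val.mpr (Finset.mem_univ i))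
  have hpos : ∀ s ∈ S, 0 < s := fun s hs => Nat.pos_of_ne_zero (fun h => h0 (h ▸ hs))
  have hleM : ∀ s ∈ S, s ≤ M := fun s hs => Multiset.le_sup hs
  have keyS : ∀ a b c : ℕ, a ∈ S → b ∈ S → c ∈ S → c = a + b → False := by
    intro a b c haS hbS hcS hsum
    have ha := hpos a haS
    have hb := hpos b hbS
    by_cases hab : a = b
    · subst hab
      exact h1 a haS ha (by rw [show 2 * a = c by omega]; exact hcS)
    · exact h2 a b c haS hbS hcS hab (by omega) (by omega) (by omega)
  have key : ∀ x y : Fin (Multiset.card S) → V, (polygraph G S).Adj v x →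
      (polygraph G S).Adj v y → (polygraph G S).Adj x y →
      ∀ i p q, IsDir G (v i) p (x i) → IsDir G (v i) q (y i) → p = q := by
    intro x y hx hy hxy i p q hp hq
    by_contra hpq
    have hc := dirs_ne_imp hcyc hp hq hpq (hleM _ (memS v x hx i)) (hleM _ (memS v y hy i))
      (hleM _ (memS x y hxy i))
    exact keyS _ _ _ (memS v x hx i) (memS v y hy i) (memS x y hxy i) hc
  have hdirW : ∀ p : (polygraph G S).neighborSet v, ∀ i, 0 < G.dist (v i) (p.1 i) :=
    fun p i => hpos _ (memS v p.1 p.2 i)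
  let Ψ : (polygraph G S).neighborSet v → Fin (Multiset.card S) → V :=
    fun p i => Classical.choose (dir_exists (hdirW p i))
  have hΨ : ∀ p : (polygraph G S).neighborSet v, ∀ i, IsDir G (v i) (Ψ p i) (p.1 i) :=
    fun p i => Classical.choose_spec (dir_exists (hdirW p i))
  have hedge : ∀ a b : (polygraph G S).neighborSet v,
      (link (polygraph G S) v).Adj a b → Ψ a = Ψ b := by
    intro a b hab
    have hadj : (polygraph G S).Adj a.1 b.1 := hab
    funext i
    exact key a.1 b.1 a.2 b.2 hadj i _ _ (hΨ a i) (hΨ b i)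
  have hreach : ∀ a b : (polygraph G S).neighborSet v,
      (link (polygraph G S) v).Reachable a b → Ψ a = Ψ b := by
    intro a b hab
    obtain ⟨w⟩ := hab
    induction w with
    | nil => rfl
    | cons h p ih => exact (hedge _ _ h).trans ih
  obtain ⟨u, hu⟩ := hne
  have huadj : (polygraph G S).Adj v u := hu
  have haS : G.dist (v i₀) (u i₀) ∈ S := memS v u huadj i₀
  obtain ⟨x', hx'adj, hx'ne⟩ := hdeg (v i₀) (Ψ ⟨u, hu⟩ i₀)
  obtain ⟨u₀, hu₀dist, hu₀dir⟩ := extend_dist hcyc hdeg hx'adj (G.dist (v i₀) (u i₀))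
    (hpos _ haS) (hleM _ haS)
  set u' := Function.update u i₀ u₀ with hu'def
  have hui₀ : u' i₀ = u₀ := by rw [hu'def]; simp
  have hdists : (fun i => G.dist (v i) (u' i)) = (fun i => G.dist (v i) (u i)) := by
    funext i
    by_cases hi : i = i₀
    · subst hi
      rw [hui₀, hu₀dist]
    · rw [hu'def, Function.update_of_ne hi]
  have hu' : (polygraph G S).Adj v u' := by
    refine ⟨?_, ?_⟩
    · intro hvu'
      have h00 : G.dist (v i₀) (u' i₀) = 0 := by rw [← congrFun hvu' i₀]; simp
      rw [hui₀, hu₀dist] at h00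
      have := hpos _ haS
      omega
    · rw [show (fun i => G.dist (v i) (u' i)) = (fun i => G.dist (v i) (u i)) from hdists]
      exact huadj.2
  have hdir' : IsDir G (v i₀) x' (u' i₀) := by
    refine ⟨hx'adj, ?_⟩
    rw [hui₀, hu₀dist]
    exact hu₀dir
  have hΨu' : Ψ ⟨u', hu'⟩ i₀ = x' := by
    refine dir_unique hcyc ?_ (hΨ ⟨u', hu'⟩ i₀) hdir'
    show G.dist (v i₀) (u' i₀) ≤ M
    rw [hui₀, hu₀dist]
    exact hleM _ haS
  have hcc : Ψ ⟨u, hu⟩ = Ψ ⟨u', hu'⟩ :=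
    hreach _ _ (hconn.preconnected ⟨u, hu⟩ ⟨u', hu'⟩)
  apply hx'ne
  rw [← hΨu', ← hcc]

end PaperStmt
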